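/- There exists a unique sequence (R_n)_{n≥0} of elements of A[λ] such that R_0 = 1, each R_n for n ≥ 1 has zero constant term, and the Lenard recursion (2n+1) ∂_x R_{n+1} = u_1 · R_n + 2 u_0 · ∂_x R_n + (λ²/4) ∂_x³ R_n holds for all n ≥ 0. In particular R_1 = u_0 and R_2 = u_0²/2 + (λ²/12) u_2. -/

import Mathlib

open MvPolynomial

/-- The derivation `∂ₓ = Σ_{k≥0} u_{k+1} ∂/∂u_k` on `A = ℝ[u₀, u₁, …]`
(the sum is finite on each polynomial). -/
noncomputable def dx (f : MvPolynomial ℕ ℝ) : MvPolynomial ℕ ℝ :=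
  ∑ᶠ k : ℕ, X (k + 1) * pderiv k f


abbrev A := MvPolynomial ℕ ℝ
abbrev PP := Polynomial A

noncomputable def mkD : Derivation ℝ A A := mkDerivation ℝ (fun k => X (k+1))

lemma dx_eq_sum {f : A} {s : Finset ℕ} (h : ∀ k ∉ s, pderiv k f = 0) :
    dx f = ∑ k ∈ s, X (k + 1) * pderiv k f := by
  apply finsum_eq_sum_of_support_subset
  intro k hk
  by_contra hks
  exact hk (by simp [h k hks])

noncomputable def Ds (s : Finset ℕ) : Derivation ℝ A A :=
  ∑ k ∈ s, (X (k+1) : A) • (pderiv k : Derivation ℝ A A)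

lemma Ds_apply (s : Finset ℕ) (f : A) :
    Ds s f = ∑ k ∈ s, X (k + 1) * pderiv k f := by
  classical
  induction s using Finset.induction_on with
  | empty => simp [Ds]
  | insert _ _ h ih =>
    rw [Ds, Finset.sum_insert h, Finset.sum_insert h]
    rw [Derivation.add_apply, Derivation.smul_apply]
    rw [← ih]; rfl

lemma dx_eq_Ds {f : A} {s : Finset ℕ} (h : f.vars ⊆ s) : dx f = Ds s f := by
  rw [Ds_apply, dx_eq_sum]
  intro k hk
  exact pderiv_eq_zero_of_notMem_vars (fun hm => hk (h hm))

lemma dx_eq_mkD (f : A) : dx f = mkD f := by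
  rw [dx_eq_Ds (Finset.Subset.refl f.vars)]
  refine derivation_eq_of_forall_mem_vars (fun i hi => ?_)
  rw [Ds_apply, mkD, mkDerivation_X]
  rw [Finset.sum_eq_single i]
  · simp
  · intro b _ hbi
    rw [pderiv_X_of_ne (fun h => hbi h.symm), mul_zero]
  · intro hi'; exact absurd hi hi'

lemma dx_add (f g : A) : dx (f + g) = dx f + dx g := by
  simp only [dx_eq_mkD]; exact map_add _ _ _

lemma dx_sub (f g : A) : dx (f - g) = dx f - dx g := by
  simp only [dx_eq_mkD]; exact map_sub _ _ _

lemma dx_zero : dx 0 = 0 := by simp only [dx_eq_mkD]; exact map_zero _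

lemma dx_mul (f g : A) : dx (f * g) = dx f * g + f * dx g := by
  simp only [dx_eq_mkD]
  rw [Derivation.leibniz]
  simp [smul_eq_mul]; ring

lemma dx_C (a : ℝ) : dx (MvPolynomial.C a) = 0 := by
  simp only [dx_eq_mkD]; exact derivation_C _ a

lemma dx_one : dx 1 = 0 := by
  have : (1 : A) = MvPolynomial.C 1 := by simp
  rw [this, dx_C]

lemma dx_X (k : ℕ) : dx (X k) = X (k+1) := by
  rw [dx_eq_mkD]; exact mkDerivation_X _ _ _

lemma dx_sum {α : Type*} (s : Finset α) (g : α → A) :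
    dx (∑ a ∈ s, g a) = ∑ a ∈ s, dx (g a) := by
  simp only [dx_eq_mkD]
  exact map_sum mkD.toLinearMap g s

lemma constantCoeff_dx (f : A) : constantCoeff (dx f) = 0 := by
  rw [dx_eq_sum (s := f.vars) (fun k hk => pderiv_eq_zero_of_notMem_vars hk)]
  rw [map_sum]
  apply Finset.sum_eq_zero
  intro k _
  rw [map_mul, constantCoeff_X, zero_mul]

lemma coeff_pderiv (k : ℕ) (m : ℕ →₀ ℕ) (f : A) :
    coeff m (pderiv k f) = ((m k : ℝ) + 1) * coeff (m + Finsupp.single k 1) f := by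
  induction f using MvPolynomial.induction_on' with
  | monomial s a =>
    rw [pderiv_monomial, coeff_monomial, coeff_monomial]
    by_cases hs : s = m + Finsupp.single k 1
    · subst hs
      have h1 : m + Finsupp.single k 1 - Finsupp.single k 1 = m := by
        ext j; simp [Finsupp.single_apply]
      have h2 : ((m + Finsupp.single k 1 : ℕ →₀ ℕ)) k = m k + 1 := by
        rw [Finsupp.add_apply, Finsupp.single_apply, if_pos rfl]
      rw [if_pos h1, if_pos rfl, h2]
      push_cast; ring
    · rw [if_neg hs]
      by_cases h1 : s - Finsupp.single k 1 = m
      · rw [if_pos h1]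
        by_cases hk : s k = 0
        · rw [hk]; simp
        · exfalso
          apply hs
          have hle : Finsupp.single k 1 ≤ s := by
            rw [Finsupp.single_le_iff]; omega
          rw [← h1, tsub_add_cancel_of_le hle]
      · rw [if_neg h1, mul_zero]
  | add p q hp hq =>
    rw [map_add, coeff_add, coeff_add, hp, hq]; ring

lemma pderiv_comm' (i k : ℕ) (f : A) :
    pderiv i (pderiv k f) = pderiv k (pderiv i f) := by
  apply MvPolynomial.ext
  intro m
  rw [coeff_pderiv, coeff_pderiv, coeff_pderiv, coeff_pderiv]
  rw [show m + Finsupp.single i 1 + Finsupp.single k 1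
      = m + Finsupp.single k 1 + Finsupp.single i 1 by rw [add_right_comm]]
  rcases eq_or_ne i k with h | h
  · subst h; ring
  · have h1 : ((m + Finsupp.single i 1 : ℕ →₀ ℕ)) k = m k := by
      rw [Finsupp.add_apply, Finsupp.single_apply, if_neg h, add_zero]
    have h2 : ((m + Finsupp.single k 1 : ℕ →₀ ℕ)) i = m i := by
      rw [Finsupp.add_apply, Finsupp.single_apply, if_neg (Ne.symm h), add_zero]
    rw [h1, h2]; ring

lemma eq_C_of_pderiv_zero (f : A) (h : ∀ k, pderiv k f = 0) :
    f = MvPolynomial.C (constantCoeff f) := by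
  apply MvPolynomial.ext
  intro m
  rcases eq_or_ne m 0 with hm | hm
  · subst hm; simp [constantCoeff_eq]
  · have hcC : coeff m (MvPolynomial.C (constantCoeff f) : A) = 0 := by
      rw [coeff_C, if_neg (Ne.symm hm)]
    rw [hcC]
    obtain ⟨k, hk⟩ : ∃ k, m k ≠ 0 := by
      by_contra hc
      push_neg at hc
      exact hm (Finsupp.ext (by simpa using hc))
    have hle : Finsupp.single k 1 ≤ m := by
      rw [Finsupp.single_le_iff]; omega
    have hrepr : m - Finsupp.single k 1 + Finsupp.single k 1 = m :=
      tsub_add_cancel_of_le hle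
    have hc := coeff_pderiv k (m - Finsupp.single k 1) f
    rw [h k, hrepr] at hc
    simp only [coeff_zero] at hc
    rcases mul_eq_zero.mp hc.symm with h0 | h0
    · exfalso; revert h0; positivity
    · exact h0

lemma pderiv_dx_top {f : A} {N : ℕ} (h : ∀ k, N + 1 ≤ k → pderiv k f = 0)
    (hdx : dx f = 0) : pderiv N f = 0 := by
  have hrep : dx f = ∑ k ∈ Finset.range (N+1), X (k + 1) * pderiv k f :=
    dx_eq_sum (fun k hk => h k (by simpa using hk))
  have h0 : (0 : A) = ∑ k ∈ Finset.range (N+1),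
      pderiv (N+1) (X (k+1) * pderiv k f) := by
    rw [← map_sum, ← hrep, hdx, map_zero]
  rw [h0]
  rw [Finset.sum_eq_single N]
  · rw [pderiv_mul, pderiv_X_self, one_mul, pderiv_comm', h (N+1) le_rfl,
      map_zero, mul_zero, add_zero]
  · intro k _ hkN
    rw [pderiv_mul, pderiv_X_of_ne (by omega), zero_mul, zero_add,
      pderiv_comm', h (N+1) le_rfl, map_zero, mul_zero]
  · intro hN; exact absurd (Finset.self_mem_range_succ N) hN

lemma pderiv_all_zero_of_dx_zero {f : A} (hdx : dx f = 0) (k : ℕ) :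
    pderiv k f = 0 := by
  obtain ⟨N, hN⟩ : ∃ N, ∀ k, N ≤ k → pderiv k f = 0 := by
    refine ⟨f.vars.sup id + 1, fun k hk => pderiv_eq_zero_of_notMem_vars (fun hm => ?_)⟩
    have := Finset.le_sup (f := id) hm
    simp at this; omega
  have key : ∀ n, ∀ g : A, (∀ k, n ≤ k → pderiv k g = 0) → dx g = 0 →
      ∀ k, pderiv k g = 0 := by
    intro n
    induction n with
    | zero => intro g hg _ k; exact hg k (Nat.zero_le k)
    | succ n ih =>
      intro g hg hdg k
      have hn : pderiv n g = 0 := pderiv_dx_top hg hdg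
      refine ih g (fun j hj => ?_) hdg k
      rcases eq_or_lt_of_le hj with h | h
      · rw [← h]; exact hn
      · exact hg j h
  exact key N f hN hdx k

lemma ker_dx {f : A} (hdx : dx f = 0) : f = MvPolynomial.C (constantCoeff f) :=
  eq_C_of_pderiv_zero f (pderiv_all_zero_of_dx_zero hdx)

lemma ker_dx' {f : A} (hdx : dx f = 0) (hc : constantCoeff f = 0) : f = 0 := by
  rw [ker_dx hdx, hc, map_zero]

/-- The λ-linear extension of `∂ₓ` to `A[λ]` (acting on coefficients). -/
noncomputable def dxP (p : Polynomial (MvPolynomial ℕ ℝ)) :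
    Polynomial (MvPolynomial ℕ ℝ) :=
  p.sum fun n a => Polynomial.C (dx a) * Polynomial.X ^ n


lemma coeff_dxP (p : PP) (i : ℕ) : (dxP p).coeff i = dx (p.coeff i) := by
  classical
  rw [dxP, Polynomial.sum_def, Polynomial.finset_sum_coeff]
  have hterm : ∀ n ∈ p.support,
      (Polynomial.C (dx (p.coeff n)) * Polynomial.X ^ n).coeff i
        = if n = i then dx (p.coeff n) else 0 := by
    intro n _
    rw [Polynomial.coeff_C_mul, Polynomial.coeff_X_pow, mul_ite, mul_one, mul_zero]
    rcases eq_or_ne i n with h | h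
    · subst h; rfl
    · rw [if_neg h, if_neg (Ne.symm h)]
  rw [Finset.sum_congr rfl hterm,
    Finset.sum_ite_eq' p.support i (fun n => dx (p.coeff n))]
  by_cases h : i ∈ p.support
  · rw [if_pos h]
  · rw [if_neg h, Polynomial.notMem_support_iff.mp h, dx_zero]

lemma dxP_add (p q : PP) : dxP (p + q) = dxP p + dxP q := by
  apply Polynomial.ext; intro i
  simp [coeff_dxP, dx_add]

lemma dxP_sub (p q : PP) : dxP (p - q) = dxP p - dxP q := by
  apply Polynomial.ext; intro i
  simp [coeff_dxP, dx_sub]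

lemma dxP_zero : dxP 0 = 0 := by
  apply Polynomial.ext; intro i; simp [coeff_dxP, dx_zero]

lemma dxP_C (a : A) : dxP (Polynomial.C a) = Polynomial.C (dx a) := by
  apply Polynomial.ext; intro i
  rcases eq_or_ne i 0 with h | h
  · subst h; simp [coeff_dxP]
  · simp [coeff_dxP, Polynomial.coeff_C, h, dx_zero]

lemma dxP_one : dxP 1 = 0 := by
  rw [show (1 : PP) = Polynomial.C 1 from rfl, dxP_C, dx_one, map_zero]

lemma dxP_mul (p q : PP) : dxP (p * q) = dxP p * q + p * dxP q := by
  apply Polynomial.ext; intro i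
  rw [coeff_dxP, Polynomial.coeff_mul, dx_sum, Polynomial.coeff_add,
    Polynomial.coeff_mul, Polynomial.coeff_mul, ← Finset.sum_add_distrib]
  refine Finset.sum_congr rfl (fun x _ => ?_)
  rw [dx_mul, coeff_dxP, coeff_dxP]

lemma dxP_X_pow (n : ℕ) : dxP (Polynomial.X ^ n) = 0 := by
  apply Polynomial.ext; intro i
  rw [coeff_dxP, Polynomial.coeff_X_pow, Polynomial.coeff_zero]
  split_ifs
  · exact dx_one
  · exact dx_zero

lemma dxP_X : dxP (Polynomial.X : PP) = 0 := by
  have := dxP_X_pow 1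
  rwa [pow_one] at this

lemma dxP_sum {α : Type*} (s : Finset α) (g : α → PP) :
    dxP (∑ a ∈ s, g a) = ∑ a ∈ s, dxP (g a) := by
  classical
  induction s using Finset.induction_on with
  | empty => simp [dxP_zero]
  | insert _ _ h ih => rw [Finset.sum_insert h, Finset.sum_insert h, dxP_add, ih]

lemma dxP_C_mul (a : A) (hc : dx a = 0) (p : PP) :
    dxP (Polynomial.C a * p) = Polynomial.C a * dxP p := by
  rw [dxP_mul, dxP_C, hc, map_zero, zero_mul, zero_add]

noncomputable def Phi : PP →+* Polynomial ℝ :=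
  Polynomial.mapRingHom (constantCoeff : A →+* ℝ)

lemma Phi_dxP (p : PP) : Phi (dxP p) = 0 := by
  apply Polynomial.ext; intro i
  rw [Phi, Polynomial.coe_mapRingHom, Polynomial.coeff_map, coeff_dxP,
    constantCoeff_dx, Polynomial.coeff_zero]

/-- `p ∈ A[λ]` has zero constant term: the constant term (in the variables `u_k`)
of every `λ`-coefficient of `p` vanishes. -/
def NoConst (p : Polynomial (MvPolynomial ℕ ℝ)) : Prop :=
  ∀ i : ℕ, coeff 0 (p.coeff i) = 0

/-- `R : ℕ → A[λ]` is the sequence of Gelfand–Dickey polynomials: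
`R 0 = 1`, each `R n` for `n ≥ 1` has zero constant term, and the Lenard recursion
`(2n+1) ∂ₓ R_{n+1} = u₁ R_n + 2 u₀ ∂ₓ R_n + (λ²/4) ∂ₓ³ R_n` holds. -/
def IsGD (R : ℕ → Polynomial (MvPolynomial ℕ ℝ)) : Prop :=
  R 0 = 1 ∧ (∀ n : ℕ, 1 ≤ n → NoConst (R n)) ∧
  ∀ n : ℕ,
    Polynomial.C (MvPolynomial.C (2 * (n : ℝ) + 1)) * dxP (R (n + 1)) =
      Polynomial.C (X 1) * R n
      + Polynomial.C (MvPolynomial.C 2 * X 0) * dxP (R n)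
      + Polynomial.C (MvPolynomial.C (1 / 4 : ℝ)) * Polynomial.X ^ 2
          * dxP (dxP (dxP (R n)))


/-- the Lenard operator -/
noncomputable def FF (q : PP) : PP :=
  Polynomial.C (X 1) * q + Polynomial.C (MvPolynomial.C 2 * X 0) * dxP q
  + Polynomial.C (MvPolynomial.C (1/4 : ℝ)) * Polynomial.X ^ 2 * dxP (dxP (dxP q))

/-- symmetric bilinear potential -/
noncomputable def G2 (f g : PP) : PP :=
  Polynomial.C (MvPolynomial.C 2 * X 0) * (f * g)
  + Polynomial.C (MvPolynomial.C (1/4 : ℝ)) * Polynomial.X ^ 2 *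
      (f * dxP (dxP g) + dxP (dxP f) * g - dxP f * dxP g)

lemma dxP_G2 (f g : PP) : dxP (G2 f g) = f * FF g + FF f * g := by
  have h1 : dx (MvPolynomial.C 2 * X 0) = MvPolynomial.C 2 * X 1 := by
    rw [dx_mul, dx_C, dx_X, zero_mul, zero_add]
  have h2 : dx (MvPolynomial.C (1/4 : ℝ)) = 0 := dx_C _
  unfold G2 FF
  simp only [dxP_add, dxP_sub, dxP_mul, dxP_C, dxP_X_pow, h1, h2, map_zero,
    zero_mul, mul_zero, zero_add, add_zero]
  simp only [map_mul, map_ofNat]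
  ring

noncomputable def T : ℕ → PP
  | 0 => 1
  | (m+1) => Polynomial.C (MvPolynomial.C (1/2 : ℝ)) *
      ((∑ i ∈ (Finset.range (m+1)).attach, G2 (T i.1) (T (m - i.1)))
        - ∑ i ∈ (Finset.range m).attach, T (i.1 + 1) * T (m - i.1))
  decreasing_by
  · have := i.2; simp only [Finset.mem_range] at this; omega
  · omega
  · have := i.2; simp only [Finset.mem_range] at this; omega
  · omega

lemma T_zero : T 0 = 1 := by rw [T]

lemma T_succ (m : ℕ) : T (m+1) = Polynomial.C (MvPolynomial.C (1/2 : ℝ)) *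
    ((∑ i ∈ Finset.range (m+1), G2 (T i) (T (m - i)))
      - ∑ i ∈ Finset.range m, T (i + 1) * T (m - i)) := by
  rw [T]
  rw [Finset.sum_attach (Finset.range (m+1)) (fun i => G2 (T i) (T (m - i))),
    Finset.sum_attach (Finset.range m) (fun i => T (i + 1) * T (m - i))]

lemma half_two : (Polynomial.C (MvPolynomial.C (1/2 : ℝ)) : PP) * 2 = 1 := by
  rw [show (2 : PP) = Polynomial.C (MvPolynomial.C (2:ℝ)) from by
    rw [map_ofNat, map_ofNat], ← map_mul, ← map_mul]
  norm_num

lemma half_cancel (x : PP) :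
    Polynomial.C (MvPolynomial.C (1/2 : ℝ)) * (x + x) = x := by
  rw [show x + x = 2 * x from by ring, ← mul_assoc, half_two, one_mul]

lemma quad (m : ℕ) :
    ∑ i ∈ Finset.range (m+2), T i * T (m+1 - i)
      = ∑ i ∈ Finset.range (m+1), G2 (T i) (T (m - i)) := by
  have hhalf := half_two
  rw [Finset.sum_range_succ, Finset.sum_range_succ']
  simp only [Nat.succ_sub_succ, Nat.sub_zero, Nat.sub_self, T_zero, one_mul, mul_one]
  rw [T_succ m]
  set D := (∑ i ∈ Finset.range (m+1), G2 (T i) (T (m - i)))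
    - ∑ i ∈ Finset.range m, T (i + 1) * T (m - i) with hD
  have : ∀ x : PP, x + Polynomial.C (MvPolynomial.C (1/2 : ℝ)) * D
      + Polynomial.C (MvPolynomial.C (1/2 : ℝ)) * D
      = x + (Polynomial.C (MvPolynomial.C (1/2 : ℝ)) * 2) * D := by
    intro x; ring
  rw [this, hhalf, one_mul, hD]
  ring

lemma reflect_sum (t : ℕ) (F G : ℕ → PP) :
    ∑ i ∈ Finset.range (t+1), F i * G (t - i)
      = ∑ i ∈ Finset.range (t+1), G i * F (t - i) := by
  rw [← Finset.sum_range_reflect (fun i => F i * G (t - i)) (t+1)]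
  refine Finset.sum_congr rfl (fun j hj => ?_)
  simp only [Finset.mem_range] at hj
  have h1 : t + 1 - 1 - j = t - j := by omega
  have h2 : t - (t - j) = j := by omega
  rw [h1, h2, mul_comm]

lemma lenT : ∀ m, dxP (T (m+1)) = FF (T m) := by
  intro m
  induction m using Nat.strong_induction_on with
  | _ m ih =>
    have hq := congrArg dxP (quad m)
    rw [dxP_sum, dxP_sum] at hq
    rw [Finset.sum_congr rfl (fun i _ => dxP_mul (T i) (T (m+1 - i))),
      Finset.sum_congr rfl (fun i _ => dxP_G2 (T i) (T (m - i)))] at hq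
    rw [Finset.sum_add_distrib, Finset.sum_add_distrib] at hq
    rw [reflect_sum (m+1) (fun i => dxP (T i)) T] at hq
    rw [reflect_sum m (fun i => FF (T i)) T] at hq
    set A1 := ∑ i ∈ Finset.range (m+2), T i * dxP (T (m+1 - i)) with hA1
    set B1 := ∑ i ∈ Finset.range (m+1), T i * FF (T (m - i)) with hB1
    have hq2 : A1 + A1 = B1 + B1 := by
      convert hq using 2 <;> rw [hA1] <;>
        refine Finset.sum_congr rfl (fun i _ => rfl)
    have hAB : A1 = B1 := by
      have := congrArg (fun x => Polynomial.C (MvPolynomial.C (1/2 : ℝ)) * x) hq2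
      simpa only [half_cancel] using this
    have hA1' : A1 = ∑ i ∈ Finset.range (m+1), T i * dxP (T (m+1 - i)) := by
      rw [hA1, Finset.sum_range_succ, Nat.sub_self, T_zero, dxP_one, mul_zero,
        add_zero]
    have key : ∑ i ∈ Finset.range (m+1),
        (T i * dxP (T (m+1 - i)) - T i * FF (T (m - i))) = 0 := by
      rw [Finset.sum_sub_distrib, ← hA1', hAB, sub_self]
    rw [Finset.sum_eq_single_of_mem 0 (Finset.mem_range.mpr (by omega))
      (fun i hi hne => ?_)] at key
    · simp only [Nat.sub_zero, T_zero, one_mul] at key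
      exact sub_eq_zero.mp key
    · simp only [Finset.mem_range] at hi
      have h3 : m + 1 - i = (m - i) + 1 := by omega
      rw [h3, ih (m - i) (by omega), sub_self]

-- ========== new material ==========

lemma Phi_CC (r : ℝ) : Phi (Polynomial.C (MvPolynomial.C r)) = Polynomial.C r := by
  simp [Phi]

lemma Phi_G2 (f g : PP) : Phi (G2 f g) = 0 := by
  have h0 : Phi (Polynomial.C (X (0:ℕ))) = 0 := by
    simp [Phi]
  simp only [G2, map_add, map_sub, map_mul, map_pow, Phi_dxP, h0, zero_mul,
    mul_zero, sub_zero, add_zero, zero_add]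

lemma Phi_T : ∀ m, Phi (T (m+1)) = 0 := by
  intro m
  induction m using Nat.strong_induction_on with
  | _ m ih =>
    rw [T_succ, map_mul, map_sub, map_sum, map_sum,
      Finset.sum_eq_zero (fun i _ => Phi_G2 (T i) (T (m - i))),
      Finset.sum_eq_zero (fun i hi => by
        rw [map_mul, ih i (Finset.mem_range.mp hi), zero_mul])]
    simp

noncomputable def rr : ℕ → ℝ
  | 0 => 1
  | (n+1) => (2*(n:ℝ)+1) * rr n

lemma rr_pos : ∀ n, 0 < rr n := by
  intro n
  induction n with
  | zero => norm_num [rr]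
  | succ n ih => rw [rr]; positivity

noncomputable def Rgd (n : ℕ) : PP := Polynomial.C (MvPolynomial.C (rr n)⁻¹) * T n

lemma Rgd_zero : Rgd 0 = 1 := by
  simp [Rgd, rr, T_zero]

lemma FF_C_mul (c : ℝ) (p : PP) :
    FF (Polynomial.C (MvPolynomial.C c) * p)
      = Polynomial.C (MvPolynomial.C c) * FF p := by
  unfold FF
  simp only [dxP_C_mul _ (dx_C c)]
  ring

lemma lenR (n : ℕ) :
    Polynomial.C (MvPolynomial.C (2 * (n:ℝ) + 1)) * dxP (Rgd (n+1)) = FF (Rgd n) := by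
  unfold Rgd
  rw [dxP_C_mul _ (dx_C _), lenT n, FF_C_mul, ← mul_assoc, ← map_mul, ← map_mul]
  congr 2
  have h1 : rr n ≠ 0 := ne_of_gt (rr_pos n)
  have h2 : (2*(n:ℝ)+1) ≠ 0 := by positivity
  rw [show rr (n+1) = (2*(n:ℝ)+1) * rr n from rfl]
  field_simp

lemma noConst_iff (p : PP) : NoConst p ↔ Phi p = 0 := by
  rw [Polynomial.ext_iff]
  unfold NoConst
  constructor
  · intro h i
    rw [Phi, Polynomial.coe_mapRingHom, Polynomial.coeff_map, Polynomial.coeff_zero,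
      constantCoeff_eq]
    exact h i
  · intro h i
    have := h i
    rw [Phi, Polynomial.coe_mapRingHom, Polynomial.coeff_map, Polynomial.coeff_zero,
      constantCoeff_eq] at this
    exact this

lemma noConst_Rgd (n : ℕ) (hn : 1 ≤ n) : NoConst (Rgd n) := by
  rw [noConst_iff, Rgd, map_mul]
  obtain ⟨m, rfl⟩ : ∃ m, n = m + 1 := ⟨n - 1, by omega⟩
  rw [Phi_T m, mul_zero]

lemma dxP_CX (i : ℕ) : dxP (Polynomial.C (X i)) = Polynomial.C (X (i+1)) := by
  rw [dxP_C, dx_X]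

lemma T_one : T 1 = Polynomial.C (X 0) := by
  have h := T_succ 0
  rw [Finset.sum_range_one, Finset.sum_range_zero, Nat.sub_zero, sub_zero, T_zero] at h
  have hg : G2 (1:PP) 1 = Polynomial.C (MvPolynomial.C 2 * X 0) := by
    simp [G2, dxP_one, dxP_zero]
  rw [hg] at h
  rw [h, ← map_mul]
  congr 1
  rw [← mul_assoc, ← map_mul]
  norm_num

lemma hG2a : G2 (1:PP) (Polynomial.C (X 0))
    = Polynomial.C (MvPolynomial.C 2) * Polynomial.C (X 0)^2
      + Polynomial.C (MvPolynomial.C (1/4:ℝ)) * Polynomial.X^2 * Polynomial.C (X 2) := by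
  unfold G2
  rw [dxP_one, dxP_zero, dxP_CX, dxP_CX]
  simp only [map_mul]
  ring

lemma hG2b : G2 (Polynomial.C (X 0)) (1:PP)
    = Polynomial.C (MvPolynomial.C 2) * Polynomial.C (X 0)^2
      + Polynomial.C (MvPolynomial.C (1/4:ℝ)) * Polynomial.X^2 * Polynomial.C (X 2) := by
  unfold G2
  rw [dxP_one, dxP_zero, dxP_CX, dxP_CX]
  simp only [map_mul]
  ring

lemma T_two : T 2 = Polynomial.C (MvPolynomial.C (3/2 : ℝ) * X 0^2)
      + Polynomial.C (MvPolynomial.C (1/4 : ℝ) * X 2) * Polynomial.X^2 := by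
  have h := T_succ 1
  rw [Finset.sum_range_succ, Finset.sum_range_one, Finset.sum_range_one] at h
  norm_num at h
  rw [T_zero, T_one, hG2a, hG2b] at h
  have e1 : (Polynomial.C (MvPolynomial.C (2:ℝ)) : PP)
      - Polynomial.C (MvPolynomial.C (1/2:ℝ)) = Polynomial.C (MvPolynomial.C (3/2:ℝ)) := by
    rw [← map_sub, ← map_sub]
    norm_num
  rw [h]
  simp only [map_mul, map_pow]
  linear_combination (Polynomial.C (MvPolynomial.C (2:ℝ)) * Polynomial.C (X 0)^2
      + Polynomial.C (MvPolynomial.C (1/4:ℝ)) * Polynomial.X^2 * Polynomial.C (X 2)) * half_two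
    + Polynomial.C (X 0)^2 * e1

lemma Rgd_one : Rgd 1 = Polynomial.C (X 0) := by
  have : rr 1 = 1 := by norm_num [rr]
  rw [Rgd, this, T_one]
  norm_num

lemma Rgd_two : Rgd 2 = Polynomial.C (MvPolynomial.C (1 / 2 : ℝ) * X 0 ^ 2)
      + Polynomial.C (MvPolynomial.C (1 / 12 : ℝ) * X 2) * Polynomial.X ^ 2 := by
  have hr : rr 2 = 3 := by norm_num [rr]
  rw [Rgd, hr, T_two]
  have e2 : (Polynomial.C (MvPolynomial.C ((3:ℝ))⁻¹) : PP)
      * Polynomial.C (MvPolynomial.C (3/2:ℝ)) = Polynomial.C (MvPolynomial.C (1/2:ℝ)) := by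
    rw [← map_mul, ← map_mul]; norm_num
  have e3 : (Polynomial.C (MvPolynomial.C ((3:ℝ))⁻¹) : PP)
      * Polynomial.C (MvPolynomial.C (1/4:ℝ)) = Polynomial.C (MvPolynomial.C (1/12:ℝ)) := by
    rw [← map_mul, ← map_mul]; norm_num
  simp only [map_mul, map_pow]
  linear_combination (Polynomial.C (X 0)^2) * e2 + (Polynomial.C (X 2) * Polynomial.X^2) * e3

lemma isGD_Rgd : IsGD Rgd := by
  refine ⟨Rgd_zero, noConst_Rgd, fun n => ?_⟩
  have := lenR n
  unfold FF at this
  exact this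

lemma uniq (R' : ℕ → PP) (h : IsGD R') : ∀ n, R' n = Rgd n := by
  obtain ⟨h0, hnc, hrec⟩ := h
  intro n
  induction n with
  | zero => rw [h0, Rgd_zero]
  | succ n ih =>
    have e : Polynomial.C (MvPolynomial.C (2 * (n:ℝ) + 1)) * dxP (R' (n + 1))
        = FF (R' n) := hrec n
    rw [ih] at e
    have e2 := lenR n
    have e3 : dxP (R' (n+1)) = dxP (Rgd (n+1)) := by
      have hC : (Polynomial.C (MvPolynomial.C (2*(n:ℝ)+1)) : PP) ≠ 0 := by
        simp only [ne_eq, Polynomial.C_eq_zero, MvPolynomial.C_eq_zero]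
        positivity
      exact mul_left_cancel₀ hC (e.trans e2.symm)
    apply Polynomial.ext
    intro i
    have hd : dx ((R' (n+1)).coeff i - (Rgd (n+1)).coeff i) = 0 := by
      rw [dx_sub, ← coeff_dxP, ← coeff_dxP, e3, sub_self]
    have hcc : constantCoeff ((R' (n+1)).coeff i - (Rgd (n+1)).coeff i) = 0 := by
      have c1 := hnc (n+1) (by omega) i
      have c2 := noConst_Rgd (n+1) (by omega) i
      rw [map_sub, constantCoeff_eq]
      rw [c1, c2, sub_zero]
    have := ker_dx' hd hcc
    exact sub_eq_zero.mp this

/-- there is a unique sequence `(R_n)` in `A[λ]` with `R 0 = 1`,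
zero constant term for `n ≥ 1`, and satisfying the Lenard recursion; moreover
`R 1 = u₀` and `R 2 = u₀²/2 + (λ²/12) u₂`. -/
theorem gelfandDickey_exists_unique :
    ∃ R : ℕ → Polynomial (MvPolynomial ℕ ℝ), IsGD R ∧
      R 1 = Polynomial.C (X 0) ∧
      R 2 = Polynomial.C (MvPolynomial.C (1 / 2 : ℝ) * X 0 ^ 2)
            + Polynomial.C (MvPolynomial.C (1 / 12 : ℝ) * X 2) * Polynomial.X ^ 2 ∧
      ∀ R' : ℕ → Polynomial (MvPolynomial ℕ ℝ), IsGD R' → R' = R := by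
  exact ⟨Rgd, isGD_Rgd, Rgd_one, Rgd_two, fun R' h => funext (uniq R' h)⟩
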